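/- The intersection of the kernels of the two Kronecker Laplacian matrices equals the span of the Kronecker products of component indicator vectors: Ker(I_p ⊗ L_r) ∩ Ker(L_c ⊗ I_n) = Span{ χ_{B_c} ⊗ χ_{A_r} : r = 1,…,R, c = 1,…,C }. -/
import Mathlib


open Matrix BigOperators Finset Kronecker

/-- The weighted graph Laplacian: `L i i = ∑ j, w i j` and `L i j = -(w i j)` for `i ≠ j`. -/
noncomputable def lap {n : ℕ} (w : Fin n → Fin n → ℝ) : Matrix (Fin n) (Fin n) ℝ :=
  Matrix.of fun i j => if i = j then (∑ k, w i k) else -(w i j)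

/-- The graph on `Fin n` with `i ~ j` iff `i ≠ j` and `w i j > 0` (for symmetric `w`). -/
def graphOf {n : ℕ} (w : Fin n → Fin n → ℝ) : SimpleGraph (Fin n) :=
  SimpleGraph.fromRel (fun i j => 0 < w i j)

/-- The 0/1 indicator vector of a subset. -/
noncomputable def chi {n : ℕ} (A : Set (Fin n)) : Fin n → ℝ :=
  A.indicator (fun _ => (1 : ℝ))

/-- The diagonal 0/1 projection matrix `P_Ω`, acting on column-major vectorizations
indexed by `Fin p × Fin n` (first the column index, then the row index). -/
noncomputable def Pmat {n p : ℕ} (Ω : Finset (Fin n × Fin p)) :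
    Matrix (Fin p × Fin n) (Fin p × Fin n) ℝ :=
  Matrix.diagonal fun q => if (q.2, q.1) ∈ Ω then (1 : ℝ) else 0

/-- The matrix `S(γr, γc) = P_Ω + γr (I_p ⊗ L_r) + γc (L_c ⊗ I_n)`. -/
noncomputable def Smat {n p : ℕ} (Ω : Finset (Fin n × Fin p)) (γr γc : ℝ)
    (Lr : Matrix (Fin n) (Fin n) ℝ) (Lc : Matrix (Fin p) (Fin p) ℝ) :
    Matrix (Fin p × Fin n) (Fin p × Fin n) ℝ :=
  Pmat Ω + γr • ((1 : Matrix (Fin p) (Fin p) ℝ) ⊗ₖ Lr)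
    + γc • (Lc ⊗ₖ (1 : Matrix (Fin n) (Fin n) ℝ))

section Aux

variable {n : ℕ}

lemma lap_mulVec (w : Fin n → Fin n → ℝ) (hdiag : ∀ i, w i i = 0)
    (x : Fin n → ℝ) (i : Fin n) :
    (lap w).mulVec x i = ∑ j, w i j * (x i - x j) := by
  have h : ∀ j : Fin n, (if i = j then (∑ k, w i k) else -(w i j)) * x j
      = (if i = j then (∑ k, w i k) * x i else 0) - w i j * x j := by
    intro j
    by_cases h : i = j
    · subst h; simp [hdiag]
    · simp [h]
  simp only [Matrix.mulVec, dotProduct, lap, Matrix.of_apply]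
  rw [Finset.sum_congr rfl (fun j _ => h j), Finset.sum_sub_distrib,
    Finset.sum_ite_eq Finset.univ i (fun _ => (∑ k, w i k) * x i)]
  simp [Finset.sum_sub_distrib, Finset.sum_mul, mul_sub]

lemma ker_lap_adj (w : Fin n → Fin n → ℝ) (hsymm : ∀ i j, w i j = w j i)
    (hnonneg : ∀ i j, 0 ≤ w i j) (hdiag : ∀ i, w i i = 0)
    (x : Fin n → ℝ) (hx : (lap w).mulVec x = 0) :
    ∀ i j, 0 < w i j → x i = x j := by
  have hL : ∀ i, ∑ j, w i j * (x i - x j) = 0 := by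
    intro i
    rw [← lap_mulVec w hdiag, hx]
    rfl
  have h1 : ∑ i, ∑ j, w i j * x i * (x i - x j) = 0 := by
    refine Finset.sum_eq_zero fun i _ => ?_
    have : ∑ j, w i j * x i * (x i - x j) = x i * ∑ j, w i j * (x i - x j) := by
      rw [Finset.mul_sum]; refine Finset.sum_congr rfl fun j _ => by ring
    rw [this, hL, mul_zero]
  have h2 : ∑ i, ∑ j, w i j * x j * (x j - x i) = 0 := by
    rw [Finset.sum_comm]
    refine Finset.sum_eq_zero fun j _ => ?_
    have : ∑ i, w i j * x j * (x j - x i) = x j * ∑ i, w j i * (x j - x i) := by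
      rw [Finset.mul_sum]; refine Finset.sum_congr rfl fun i _ => by rw [hsymm]; ring
    rw [this, hL, mul_zero]
  have h0 : ∑ i, ∑ j, w i j * (x i - x j) ^ 2 = 0 := by
    have : ∀ i j : Fin n, w i j * (x i - x j) ^ 2
        = w i j * x i * (x i - x j) + w i j * x j * (x j - x i) := fun i j => by ring
    calc ∑ i, ∑ j, w i j * (x i - x j) ^ 2
        = ∑ i, ∑ j, (w i j * x i * (x i - x j) + w i j * x j * (x j - x i)) := by
          exact Finset.sum_congr rfl fun i _ => Finset.sum_congr rfl fun j _ => this i j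
      _ = (∑ i, ∑ j, w i j * x i * (x i - x j)) + ∑ i, ∑ j, w i j * x j * (x j - x i) := by
          rw [← Finset.sum_add_distrib]
          exact Finset.sum_congr rfl fun i _ => Finset.sum_add_distrib
      _ = 0 := by rw [h1, h2, add_zero]
  have hterm : ∀ i j : Fin n, w i j * (x i - x j) ^ 2 = 0 := by
    intro i j
    have hnn : ∀ i ∈ Finset.univ (α := Fin n), 0 ≤ ∑ j, w i j * (x i - x j) ^ 2 :=
      fun i _ => Finset.sum_nonneg fun j _ =>
        mul_nonneg (hnonneg i j) (sq_nonneg _)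
    have hi : ∑ j, w i j * (x i - x j) ^ 2 = 0 :=
      (Finset.sum_eq_zero_iff_of_nonneg hnn).mp h0 i (Finset.mem_univ i)
    have hnn' : ∀ j ∈ Finset.univ (α := Fin n), 0 ≤ w i j * (x i - x j) ^ 2 :=
      fun j _ => mul_nonneg (hnonneg i j) (sq_nonneg _)
    exact (Finset.sum_eq_zero_iff_of_nonneg hnn').mp hi j (Finset.mem_univ j)
  intro i j hw
  have := hterm i j
  have h2 : (x i - x j) ^ 2 = 0 := by
    rcases mul_eq_zero.mp this with h | h
    · exact absurd h (ne_of_gt hw)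
    · exact h
  have := pow_eq_zero_iff (n := 2) (by norm_num) |>.mp h2
  linarith [sub_eq_zero.mp this]

lemma mem_ker_lap_iff (w : Fin n → Fin n → ℝ) (hsymm : ∀ i j, w i j = w j i)
    (hnonneg : ∀ i j, 0 ≤ w i j) (hdiag : ∀ i, w i i = 0) (x : Fin n → ℝ) :
    (lap w).mulVec x = 0 ↔ ∀ i j, (graphOf w).connectedComponentMk i
      = (graphOf w).connectedComponentMk j → x i = x j := by
  constructor
  · intro hx i j hij
    have hadj : ∀ a b : Fin n, (graphOf w).Adj a b → x a = x b := by
      intro a b hab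
      rw [graphOf, SimpleGraph.fromRel_adj] at hab
      rcases hab.2 with h | h
      · exact ker_lap_adj w hsymm hnonneg hdiag x hx a b h
      · exact (ker_lap_adj w hsymm hnonneg hdiag x hx b a h).symm
    have hreach := (SimpleGraph.ConnectedComponent.eq).mp hij
    obtain ⟨wk⟩ := hreach
    induction wk with
    | nil => rfl
    | cons h p ih => exact (hadj _ _ h).trans (ih (SimpleGraph.ConnectedComponent.sound ⟨p⟩))
  · intro hconst
    funext i
    rw [lap_mulVec w hdiag]
    refine Finset.sum_eq_zero fun j _ => ?_
    by_cases hw : w i j = 0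
    · rw [hw, zero_mul]
    · have hpos : 0 < w i j := lt_of_le_of_ne (hnonneg i j) (Ne.symm hw)
      have hne : i ≠ j := by
        rintro rfl; exact hw (hdiag i)
      have hadj : (graphOf w).Adj i j := by
        rw [graphOf, SimpleGraph.fromRel_adj]
        exact ⟨hne, Or.inl hpos⟩
      have := hconst i j (SimpleGraph.ConnectedComponent.sound hadj.reachable)
      rw [this, sub_self, mul_zero]

lemma kron_one_left_mulVec {p : ℕ} (L : Matrix (Fin n) (Fin n) ℝ)
    (x : Fin p × Fin n → ℝ) (q : Fin p × Fin n) :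
    ((1 : Matrix (Fin p) (Fin p) ℝ) ⊗ₖ L).mulVec x q
      = L.mulVec (fun j => x (q.1, j)) q.2 := by
  obtain ⟨q1, q2⟩ := q
  simp [Matrix.mulVec, dotProduct, Fintype.sum_prod_type,
    Matrix.one_apply, ite_mul, Finset.sum_ite_eq]

lemma kron_one_right_mulVec {p : ℕ} (L : Matrix (Fin p) (Fin p) ℝ)
    (x : Fin p × Fin n → ℝ) (q : Fin p × Fin n) :
    (L ⊗ₖ (1 : Matrix (Fin n) (Fin n) ℝ)).mulVec x q
      = L.mulVec (fun j => x (j, q.2)) q.1 := by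
  obtain ⟨q1, q2⟩ := q
  simp [Matrix.mulVec, dotProduct, Fintype.sum_prod_type,
    Matrix.one_apply, mul_ite, Finset.sum_ite_eq]

end Aux

/-- `Ker(I_p ⊗ L_r) ∩ Ker(L_c ⊗ I_n)` equals the span of the Kronecker
products `χ_{B_c} ⊗ χ_{A_r}` of component indicator vectors. -/
theorem kron_kernel_intersection {n p R C : ℕ}
    (w : Fin n → Fin n → ℝ) (wt : Fin p → Fin p → ℝ)
    (hsymm : ∀ i j, w i j = w j i) (hnonneg : ∀ i j, 0 ≤ w i j)
    (hdiag : ∀ i, w i i = 0)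
    (hsymm' : ∀ i j, wt i j = wt j i) (hnonneg' : ∀ i j, 0 ≤ wt i j)
    (hdiag' : ∀ i, wt i i = 0)
    (A : Fin R → Set (Fin n))
    (eA : (graphOf w).ConnectedComponent ≃ Fin R)
    (hA : ∀ r, A r = {v | eA ((graphOf w).connectedComponentMk v) = r})
    (B : Fin C → Set (Fin p))
    (eB : (graphOf wt).ConnectedComponent ≃ Fin C)
    (hB : ∀ c, B c = {v | eB ((graphOf wt).connectedComponentMk v) = c}) :
    LinearMap.ker ((1 : Matrix (Fin p) (Fin p) ℝ) ⊗ₖ lap w).mulVecLin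
        ⊓ LinearMap.ker (lap wt ⊗ₖ (1 : Matrix (Fin n) (Fin n) ℝ)).mulVecLin
      = Submodule.span ℝ
          (Set.range fun rc : Fin R × Fin C =>
            fun q : Fin p × Fin n => chi (B rc.2) q.1 * chi (A rc.1) q.2) := by
  classical
  -- evaluation of the indicators
  have chiA_eq : ∀ (r : Fin R) (v : Fin n),
      chi (A r) v = if eA ((graphOf w).connectedComponentMk v) = r then 1 else 0 := by
    intro r v
    rw [chi, Set.indicator_apply, hA r]
    simp [Set.mem_setOf_eq]
  have chiB_eq : ∀ (c : Fin C) (v : Fin p),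
      chi (B c) v = if eB ((graphOf wt).connectedComponentMk v) = c then 1 else 0 := by
    intro c v
    rw [chi, Set.indicator_apply, hB c]
    simp [Set.mem_setOf_eq]
  apply le_antisymm
  · -- kernel ≤ span
    intro x hx
    rw [Submodule.mem_inf] at hx
    obtain ⟨h1, h2⟩ := hx
    rw [LinearMap.mem_ker, Matrix.mulVecLin_apply] at h1
    rw [LinearMap.mem_ker, Matrix.mulVecLin_apply] at h2
    have hrow : ∀ (i : Fin p) (a b : Fin n),
        (graphOf w).connectedComponentMk a = (graphOf w).connectedComponentMk b →
        x (i, a) = x (i, b) := by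
      intro i a b hab
      have hk : (lap w).mulVec (fun j => x (i, j)) = 0 := by
        funext q2
        have := congrFun h1 (i, q2)
        rwa [kron_one_left_mulVec] at this
      exact (mem_ker_lap_iff w hsymm hnonneg hdiag _).mp hk a b hab
    have hcol : ∀ (a : Fin n) (i j : Fin p),
        (graphOf wt).connectedComponentMk i = (graphOf wt).connectedComponentMk j →
        x (i, a) = x (j, a) := by
      intro a i j hij
      have hk : (lap wt).mulVec (fun q1 => x (q1, a)) = 0 := by
        funext q1
        have := congrFun h2 (q1, a)
        rwa [kron_one_right_mulVec] at this
      exact (mem_ker_lap_iff wt hsymm' hnonneg' hdiag' _).mp hk i j hij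
    choose vA hvA using fun r : Fin R => (eA.symm r).exists_rep
    choose vB hvB using fun c : Fin C => (eB.symm c).exists_rep
    have hx : x = ∑ rc : Fin R × Fin C, x (vB rc.2, vA rc.1) •
        (fun q : Fin p × Fin n => chi (B rc.2) q.1 * chi (A rc.1) q.2) := by
      funext q
      obtain ⟨i, a⟩ := q
      obtain ⟨r0, hr0⟩ : ∃ r0, eA ((graphOf w).connectedComponentMk a) = r0 := ⟨_, rfl⟩
      obtain ⟨c0, hc0⟩ : ∃ c0, eB ((graphOf wt).connectedComponentMk i) = c0 := ⟨_, rfl⟩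
      rw [Finset.sum_apply]
      have hterm : ∀ rc : Fin R × Fin C,
          (x (vB rc.2, vA rc.1) •
            (fun q : Fin p × Fin n => chi (B rc.2) q.1 * chi (A rc.1) q.2)) (i, a)
          = (if (r0, c0) = rc then x (vB c0, vA r0) else 0) := by
        rintro ⟨r, c⟩
        simp only [Pi.smul_apply, smul_eq_mul, chiA_eq, chiB_eq, hr0, hc0]
        by_cases hr : r0 = r <;> by_cases hc : c0 = c <;>
          simp [Prod.ext_iff, hr, hc]
      rw [Finset.sum_congr rfl (fun rc _ => hterm rc), Finset.sum_ite_eq Finset.univ]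
      simp only [Finset.mem_univ, if_true]
      have hA' : (graphOf w).connectedComponentMk (vA r0)
          = (graphOf w).connectedComponentMk a := by
        have e1 : (graphOf w).connectedComponentMk (vA r0) = eA.symm r0 := hvA r0
        have e2 : (graphOf w).connectedComponentMk a = eA.symm r0 := by
          rw [← hr0, Equiv.symm_apply_apply]
        rw [e1, e2]
      have hB' : (graphOf wt).connectedComponentMk (vB c0)
          = (graphOf wt).connectedComponentMk i := by
        have e1 : (graphOf wt).connectedComponentMk (vB c0) = eB.symm c0 := hvB c0
        have e2 : (graphOf wt).connectedComponentMk i = eB.symm c0 := by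
          rw [← hc0, Equiv.symm_apply_apply]
        rw [e1, e2]
      rw [hcol (vA r0) (vB c0) i hB', hrow i (vA r0) a hA']
    rw [hx]
    refine Submodule.sum_mem _ fun rc _ => Submodule.smul_mem _ _ ?_
    exact Submodule.subset_span ⟨rc, rfl⟩
  · -- span ≤ kernel
    rw [Submodule.span_le]
    rintro _ ⟨⟨r, c⟩, rfl⟩
    constructor
    · simp only [SetLike.mem_coe, LinearMap.mem_ker, Matrix.mulVecLin_apply]
      funext q
      rw [kron_one_left_mulVec]
      have : (fun j => chi (B c) q.1 * chi (A r) j) = chi (B c) q.1 • chi (A r) := rfl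
      rw [this, Matrix.mulVec_smul]
      have hker : (lap w).mulVec (chi (A r)) = 0 := by
        rw [mem_ker_lap_iff w hsymm hnonneg hdiag]
        intro a b hab
        rw [chiA_eq, chiA_eq, hab]
      rw [hker]
      simp
    · simp only [SetLike.mem_coe, LinearMap.mem_ker, Matrix.mulVecLin_apply]
      funext q
      rw [kron_one_right_mulVec]
      have : (fun j => chi (B c) j * chi (A r) q.2)
          = chi (A r) q.2 • chi (B c) := by
        funext j; simp [mul_comm]
      rw [this, Matrix.mulVec_smul]
      have hker : (lap wt).mulVec (chi (B c)) = 0 := by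
        rw [mem_ker_lap_iff wt hsymm' hnonneg' hdiag']
        intro a b hab
        rw [chiB_eq, chiB_eq, hab]
      rw [hker]
      simp
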